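/- arXiv:1201.5976 — 2 statements merged into one kernel-verified Lean document; each statement's English description precedes it below -/
import Mathlib

section
/- If Θ ∈ H^∞_{M_n} is an inner matrix function and Φ ∈ L^∞_{M_n}, then H_Φ^* H_Φ − H_{ΘΦ}^* H_{ΘΦ} = H_Φ^* H_{Θ*} H_{Θ*}^* H_Φ. -/
open MeasureTheory Complex Real InnerProductSpace Submodule

set_option maxHeartbeats 1000000
set_option synthInstance.maxHeartbeats 200000

noncomputable section

namespace BlockToeplitz

instance fact2pi : Fact (0 < 2 * π) := ⟨by positivity⟩

/-- The unit circle, as the additive circle `ℝ / 2πℤ`. -/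
abbrev 𝕋 : Type := AddCircle (2 * π)

/-- Normalized Haar (Lebesgue) measure on the circle. -/
abbrev μ𝕋 : Measure 𝕋 := AddCircle.haarAddCircle

section Pointwise

variable {E F : Type*} [NormedAddCommGroup E] [NormedSpace ℂ E]
  [NormedAddCommGroup F] [NormedSpace ℂ F]

theorem memLp_pointwise {Φ : 𝕋 → (E →L[ℂ] F)} (hm : AEStronglyMeasurable Φ μ𝕋)
    {C : ℝ} (hC : ∀ x, ‖Φ x‖ ≤ C) (f : Lp E 2 μ𝕋) :
    MemLp (fun x => Φ x (f x)) 2 μ𝕋 := by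
  refine MemLp.of_le_mul (c := C) (Lp.memLp f) ?_ ?_
  · exact isBoundedBilinearMap_apply.continuous.comp_aestronglyMeasurable
      (hm.prodMk (Lp.aestronglyMeasurable f))
  · refine Filter.Eventually.of_forall fun x => ?_
    exact (ContinuousLinearMap.le_opNorm _ _).trans
      (mul_le_mul_of_nonneg_right (hC x) (norm_nonneg _))

/-- The operator on `L²` of pointwise application of a uniformly bounded family of
operators (e.g. multiplication by an `L^∞` matrix function). -/
def pointwiseCLM (Φ : 𝕋 → (E →L[ℂ] F)) (hm : AEStronglyMeasurable Φ μ𝕋)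
    {C : ℝ} (hC : ∀ x, ‖Φ x‖ ≤ C) : Lp E 2 μ𝕋 →L[ℂ] Lp F 2 μ𝕋 :=
  LinearMap.mkContinuous
    { toFun := fun f => (memLp_pointwise hm hC f).toLp _
      map_add' := fun f g => by
        rw [← MemLp.toLp_add (memLp_pointwise hm hC f) (memLp_pointwise hm hC g)]
        refine MemLp.toLp_congr _ _ ?_
        filter_upwards [Lp.coeFn_add f g] with x hx
        simp only [hx, Pi.add_apply, map_add]
      map_smul' := fun c f => by
        try dsimp only
        try rw [RingHom.id_apply]
        rw [← MemLp.toLp_const_smul c (memLp_pointwise hm hC f)]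
        refine MemLp.toLp_congr _ _ ?_
        filter_upwards [Lp.coeFn_smul c f] with x hx
        simp only [hx, Pi.smul_apply, ContinuousLinearMap.map_smul] }
    (max C 0)
    (by
      intro f
      simp only [LinearMap.coe_mk, AddHom.coe_mk]
      rw [Lp.norm_toLp]
      have hb : eLpNorm (fun x => Φ x (f x)) 2 μ𝕋
          ≤ ENNReal.ofReal (max C 0) * eLpNorm (f : 𝕋 → E) 2 μ𝕋 := by
        refine eLpNorm_le_mul_eLpNorm_of_ae_le_mul ?_ 2
        refine Filter.Eventually.of_forall fun x => ?_
        exact (ContinuousLinearMap.le_opNorm _ _).trans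
          (mul_le_mul_of_nonneg_right ((hC x).trans (le_max_left _ _)) (norm_nonneg _))
      calc (eLpNorm (fun x => Φ x (f x)) 2 μ𝕋).toReal
          ≤ (ENNReal.ofReal (max C 0) * eLpNorm (f : 𝕋 → E) 2 μ𝕋).toReal := by
            refine ENNReal.toReal_mono ?_ hb
            exact ENNReal.mul_ne_top ENNReal.ofReal_ne_top (Lp.eLpNorm_ne_top f)
        _ = max C 0 * ‖f‖ := by
            rw [ENNReal.toReal_mul, ENNReal.toReal_ofReal (le_max_right C 0), Lp.norm_def])

@[simp] theorem pointwiseCLM_apply (Φ : 𝕋 → (E →L[ℂ] F)) (hm : AEStronglyMeasurable Φ μ𝕋)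
    {C : ℝ} (hC : ∀ x, ‖Φ x‖ ≤ C) (f : Lp E 2 μ𝕋) :
    pointwiseCLM Φ hm hC f = (memLp_pointwise hm hC f).toLp _ := rfl

end Pointwise

end BlockToeplitz

namespace BlockToeplitz
open scoped ComplexConjugate

variable {ι : Type} [Fintype ι]

/-- `ℂ^ι`. -/
abbrev V (ι : Type) [Fintype ι] : Type := EuclideanSpace ℂ ι

/-- The space `L²(𝕋, ℂ^ι)`. -/
abbrev L2 (ι : Type) [Fintype ι] : Type := Lp (V ι) 2 μ𝕋

/-- The vector-valued trigonometric monomial `z^k ⊗ e_i` as an element of `L²`. -/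
def fourierV (ι : Type) [Fintype ι] [DecidableEq ι] (k : ℤ) (i : ι) : L2 ι :=
  (ContinuousMap.toLp (E := V ι) 2 μ𝕋 ℂ)
    ⟨fun x => fourier k x • EuclideanSpace.single i 1,
      (map_continuous (fourier k)).smul continuous_const⟩

/-- The span of the analytic-negative monomials. -/
def negSpan (ι : Type) [Fintype ι] : Submodule ℂ (L2 ι) :=
  Submodule.span ℂ
    {f | ∃ k : ℤ, k < 0 ∧ ∃ i : ι, f = @fourierV ι _ (Classical.decEq ι) k i}

/-- The vector-valued Hardy space `H²(𝕋, ℂ^ι)`, i.e. the orthogonal complement in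
`L²` of the span of the monomials `z^k ⊗ e_i`, `k < 0`. -/
def hardy (ι : Type) [Fintype ι] : Submodule ℂ (L2 ι) := (negSpan ι)ᗮ

/-- The Hardy space as a Hilbert space. -/
abbrev H2 (ι : Type) [Fintype ι] : Type := ↥(hardy ι)

instance : CompleteSpace (H2 ι) := by
  unfold H2 hardy; infer_instance

instance : HasOrthogonalProjection (hardy ι) := by
  unfold hardy; infer_instance

/-- The orthogonal projection `P` of `L²` onto `H²`. -/
def hardyProj (ι : Type) [Fintype ι] : L2 ι →L[ℂ] H2 ι :=
  orthogonalProjection (hardy ι)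

/-- A matrix-valued `L^∞` function on the circle (the matrices being identified with the
operators on `ℂ^ι` that they induce): a bounded measurable family of operators. -/
structure Symbol (ι : Type) [Fintype ι] : Type where
  toFun : 𝕋 → (V ι →L[ℂ] V ι)
  meas : AEStronglyMeasurable toFun μ𝕋
  bound : ℝ
  le_bound : ∀ x, ‖toFun x‖ ≤ bound

instance : CoeFun (Symbol ι) (fun _ => 𝕋 → (V ι →L[ℂ] V ι)) := ⟨Symbol.toFun⟩

/-- The multiplication operator `f ↦ Φ f` on `L²(𝕋, ℂ^ι)`. -/
def Symbol.mulLp (Φ : Symbol ι) : L2 ι →L[ℂ] L2 ι :=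
  pointwiseCLM Φ.toFun Φ.meas Φ.le_bound

/-- Pointwise product (composition) of two matrix symbols. -/
def Symbol.mul (Φ Ψ : Symbol ι) : Symbol ι where
  toFun := fun x => (Φ x).comp (Ψ x)
  meas := isBoundedBilinearMap_comp.continuous.comp_aestronglyMeasurable
    (Φ.meas.prodMk Ψ.meas)
  bound := max Φ.bound 0 * max Ψ.bound 0
  le_bound := fun x => (ContinuousLinearMap.opNorm_comp_le _ _).trans <|
    mul_le_mul ((Φ.le_bound x).trans (le_max_left _ _))
      ((Ψ.le_bound x).trans (le_max_left _ _)) (norm_nonneg _) (le_max_right _ _)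

/-- The pointwise adjoint symbol `Φ*` (conjugate transpose). -/
def Symbol.star (Φ : Symbol ι) : Symbol ι where
  toFun := fun x => ContinuousLinearMap.adjoint (Φ x)
  meas := (ContinuousLinearMap.adjoint (𝕜 := ℂ) (E := V ι)
      (F := V ι)).continuous.comp_aestronglyMeasurable Φ.meas
  bound := Φ.bound
  le_bound := fun x =>
    le_trans
      (le_of_eq ((ContinuousLinearMap.adjoint (𝕜 := ℂ) (E := V ι) (F := V ι)).norm_map (Φ.toFun x)))
      (Φ.le_bound x)

end BlockToeplitz

namespace BlockToeplitz
open scoped ComplexConjugate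

theorem norm_fourier_apply (k : ℤ) (x : 𝕋) : ‖fourier k x‖ = 1 := by
  rw [fourier_apply]; exact Circle.norm_coe _

section CompNeg

variable {E : Type*} [NormedAddCommGroup E] [NormedSpace ℂ E]

/-- The composition operator `f(z) ↦ f(z̄)` (i.e. `x ↦ -x` on the additive circle)
on `L²`. -/
def compNeg (E : Type*) [NormedAddCommGroup E] [NormedSpace ℂ E] :
    Lp E 2 μ𝕋 →L[ℂ] Lp E 2 μ𝕋 :=
  LinearMap.mkContinuous
    { toFun := fun f =>
        Lp.compMeasurePreserving (E := E) (p := 2) Neg.neg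
          (Measure.measurePreserving_neg μ𝕋) f
      map_add' := fun f g => by
        exact map_add (Lp.compMeasurePreserving Neg.neg (Measure.measurePreserving_neg μ𝕋)) f g
      map_smul' := fun c f => by
        apply Lp.ext
        have h1 := Lp.coeFn_compMeasurePreserving (μ := μ𝕋) (c • f)
          (Measure.measurePreserving_neg μ𝕋)
        have h2 := Lp.coeFn_compMeasurePreserving (μ := μ𝕋) f
          (Measure.measurePreserving_neg μ𝕋)
        have h3 : ((c • f : Lp E 2 μ𝕋) : 𝕋 → E) ∘ Neg.neg
            =ᵐ[μ𝕋] ((c • (f : 𝕋 → E)) ∘ Neg.neg) :=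
          (Measure.measurePreserving_neg μ𝕋).quasiMeasurePreserving.ae_eq_comp
            (Lp.coeFn_smul c f)
        filter_upwards [h1, h3,
          Lp.coeFn_smul c (Lp.compMeasurePreserving (E := E) (p := 2) Neg.neg
            (Measure.measurePreserving_neg μ𝕋) f), h2]
          with x hx1 hx3 hx4 hx2
        rw [RingHom.id_apply, hx1, hx3, hx4]
        show c • (f : 𝕋 → E) (-x)
            = c • (Lp.compMeasurePreserving (E := E) (p := 2) Neg.neg
                (Measure.measurePreserving_neg μ𝕋) f : 𝕋 → E) x
        rw [hx2]
        rfl }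
    1
    (fun f => by
      simpa using (Lp.norm_compMeasurePreserving (E := E) (p := 2) f
        (Measure.measurePreserving_neg μ𝕋)).le)

/-- The unitary operator `J f (z) = z̄ f(z̄)` on `L²`. -/
def Jop (E : Type*) [NormedAddCommGroup E] [NormedSpace ℂ E] :
    Lp E 2 μ𝕋 →L[ℂ] Lp E 2 μ𝕋 :=
  (pointwiseCLM (fun x => (fourier (-1) x : ℂ) • (1 : E →L[ℂ] E))
      (((map_continuous (fourier (-1))).smul continuous_const).aestronglyMeasurable)
      (C := 1)
      (fun x => by
        show ‖(fourier (-1)) x • (1 : E →L[ℂ] E)‖ ≤ 1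
        rw [norm_smul ((fourier (-1)) x) (1 : E →L[ℂ] E), norm_fourier_apply, one_mul,
          ContinuousLinearMap.one_def]
        exact ContinuousLinearMap.norm_id_le)).comp (compNeg E)

end CompNeg

end BlockToeplitz

namespace BlockToeplitz
open scoped ComplexConjugate

variable {ι : Type} [Fintype ι]

/-- The pointwise transposed-conjugated-reflected symbol `Φ̃(z) := Φ(z̄)*`. -/
def Symbol.tilde (Φ : Symbol ι) : Symbol ι where
  toFun := fun x => ContinuousLinearMap.adjoint (Φ.toFun (-x))
  meas := (ContinuousLinearMap.adjoint (𝕜 := ℂ) (E := V ι)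
      (F := V ι)).continuous.comp_aestronglyMeasurable
    (Φ.meas.comp_quasiMeasurePreserving
      (Measure.measurePreserving_neg μ𝕋).quasiMeasurePreserving)
  bound := Φ.bound
  le_bound := fun x =>
    le_trans
      (le_of_eq
        ((ContinuousLinearMap.adjoint (𝕜 := ℂ) (E := V ι) (F := V ι)).norm_map (Φ.toFun (-x))))
      (Φ.le_bound (-x))

/-- A matrix symbol belongs to `H^∞` iff multiplication by it leaves the Hardy space
invariant. -/
def Symbol.MemHinf (Φ : Symbol ι) : Prop :=
  ∀ f : L2 ι, f ∈ hardy ι → Φ.mulLp f ∈ hardy ι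

/-- A matrix `H^∞` symbol is inner if `Θ(z)*Θ(z) = I` a.e. -/
def Symbol.IsInner (Φ : Symbol ι) : Prop :=
  Φ.MemHinf ∧ ∀ᵐ x ∂μ𝕋, (ContinuousLinearMap.adjoint (Φ.toFun x)).comp (Φ.toFun x) = 1

/-- The block Toeplitz operator `T_Φ = P (Φ ·)` on the vector Hardy space. -/
def toeplitz (Φ : Symbol ι) : H2 ι →L[ℂ] H2 ι :=
  (hardyProj ι).comp (Φ.mulLp.comp (hardy ι).subtypeL)

/-- The block Hankel operator `H_Φ = J P^⊥ (Φ ·)`, viewed as an operator from `H²` to `H²`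
(its image indeed lies in `H²`). -/
def hankel (Φ : Symbol ι) : H2 ι →L[ℂ] H2 ι :=
  (hardyProj ι).comp <|
    (Jop (V ι)).comp <|
      (ContinuousLinearMap.id ℂ (L2 ι) - (hardy ι).subtypeL.comp (hardyProj ι)).comp <|
        Φ.mulLp.comp (hardy ι).subtypeL

/-- The image `Θ · H²` of the Hardy space under multiplication by a symbol. -/
def Symbol.rangeH2 (Φ : Symbol ι) : Submodule ℂ (L2 ι) :=
  (hardy ι).map (Φ.mulLp : L2 ι →ₗ[ℂ] L2 ι)

/-- The model space `H(Θ) := H² ⊖ Θ H²`. -/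
def modelSpace (Θ : Symbol ι) : Submodule ℂ (L2 ι) :=
  hardy ι ⊓ (Θ.rangeH2)ᗮ

/-- A scalar-valued `L^∞` function on the circle. -/
structure SymbolS : Type where
  toFun : 𝕋 → ℂ
  meas : AEStronglyMeasurable toFun μ𝕋
  bound : ℝ
  le_bound : ∀ x, ‖toFun x‖ ≤ bound

instance : CoeFun SymbolS (fun _ => 𝕋 → ℂ) := ⟨SymbolS.toFun⟩

/-- Scalar symbols embed into matrix symbols as `φ I_n`. -/
def SymbolS.toMatrix (φ : SymbolS) (ι : Type) [Fintype ι] : Symbol ι where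
  toFun := fun x => φ.toFun x • (1 : V ι →L[ℂ] V ι)
  meas := φ.meas.smul aestronglyMeasurable_const
  bound := φ.bound
  le_bound := fun x => by
    have h0 : (0 : ℝ) ≤ φ.bound := le_trans (norm_nonneg _) (φ.le_bound 0)
    calc ‖φ.toFun x • (1 : V ι →L[ℂ] V ι)‖ ≤ ‖φ.toFun x‖ * ‖(1 : V ι →L[ℂ] V ι)‖ :=
          ContinuousLinearMap.opNorm_smul_le _ _
      _ ≤ φ.bound * 1 := by
          refine mul_le_mul (φ.le_bound x) ?_ (norm_nonneg _) h0
          rw [ContinuousLinearMap.one_def]; exact ContinuousLinearMap.norm_id_le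
      _ = φ.bound := mul_one _

/-- The scalar-valued `L²` space of the circle. -/
abbrev L2S : Type := Lp ℂ 2 μ𝕋

/-- The span of the negative trigonometric monomials. -/
def negSpanS : Submodule ℂ L2S :=
  Submodule.span ℂ {f | ∃ k : ℤ, k < 0 ∧ f = fourierLp 2 k}

/-- The scalar Hardy space `H²(𝕋)`. -/
def hardyS : Submodule ℂ L2S := negSpanSᗮ

/-- The scalar Hardy space as a Hilbert space. -/
abbrev H2S : Type := ↥hardyS

instance : CompleteSpace H2S := by unfold H2S hardyS; infer_instance

instance : HasOrthogonalProjection hardyS := by unfold hardyS; infer_instance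

/-- The Szegő (Riesz) projection `P : L² → H²`. -/
def hardyProjS : L2S →L[ℂ] H2S := orthogonalProjection hardyS

/-- Multiplication by a scalar `L^∞` function, as an operator on `L²(𝕋)`. -/
def SymbolS.mulLp (φ : SymbolS) : L2S →L[ℂ] L2S :=
  pointwiseCLM (fun x => φ.toFun x • (1 : ℂ →L[ℂ] ℂ))
    (φ.meas.smul aestronglyMeasurable_const)
    (C := φ.bound)
    (fun x => by
      calc ‖φ.toFun x • (1 : ℂ →L[ℂ] ℂ)‖ ≤ ‖φ.toFun x‖ * ‖(1 : ℂ →L[ℂ] ℂ)‖ :=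
            ContinuousLinearMap.opNorm_smul_le _ _
        _ = ‖φ.toFun x‖ := by rw [norm_one, mul_one]
        _ ≤ φ.bound := φ.le_bound x)

/-- The scalar Toeplitz operator `T_φ` on `H²`. -/
def toeplitzS (φ : SymbolS) : H2S →L[ℂ] H2S :=
  hardyProjS.comp (φ.mulLp.comp hardyS.subtypeL)

/-- The scalar Hankel operator `H_φ = J P^⊥ (φ ·)` on `H²`. -/
def hankelS (φ : SymbolS) : H2S →L[ℂ] H2S :=
  hardyProjS.comp <|
    (Jop ℂ).comp <|
      (ContinuousLinearMap.id ℂ L2S - hardyS.subtypeL.comp hardyProjS).comp <|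
        φ.mulLp.comp hardyS.subtypeL

/-- Pointwise product of scalar symbols. -/
def SymbolS.mul (φ ψ : SymbolS) : SymbolS where
  toFun := fun x => φ.toFun x * ψ.toFun x
  meas := φ.meas.mul ψ.meas
  bound := max φ.bound 0 * max ψ.bound 0
  le_bound := fun x => by
    rw [norm_mul]
    exact mul_le_mul ((φ.le_bound x).trans (le_max_left _ _))
      ((ψ.le_bound x).trans (le_max_left _ _)) (norm_nonneg _) (le_max_right _ _)

/-- The complex-conjugate symbol `φ̄`. -/
def SymbolS.conj (φ : SymbolS) : SymbolS where
  toFun := fun x => conj (φ.toFun x)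
  meas := Complex.continuous_conj.comp_aestronglyMeasurable φ.meas
  bound := φ.bound
  le_bound := fun x => le_trans (le_of_eq (RCLike.norm_conj _)) (φ.le_bound x)

/-- The reflected conjugate symbol `φ̃(z) := conj (φ(z̄))`. -/
def SymbolS.tilde (φ : SymbolS) : SymbolS where
  toFun := fun x => conj (φ.toFun (-x))
  meas := Complex.continuous_conj.comp_aestronglyMeasurable
    (φ.meas.comp_quasiMeasurePreserving
      (Measure.measurePreserving_neg μ𝕋).quasiMeasurePreserving)
  bound := φ.bound
  le_bound := fun x => le_trans (le_of_eq (RCLike.norm_conj _)) (φ.le_bound (-x))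

/-- A scalar symbol is in `H^∞` iff multiplication by it preserves `H²`. -/
def SymbolS.MemHinf (φ : SymbolS) : Prop :=
  ∀ f : L2S, f ∈ hardyS → φ.mulLp f ∈ hardyS

/-- A scalar inner function: an `H^∞` function which is unimodular a.e. on the circle. -/
def SymbolS.IsInner (φ : SymbolS) : Prop :=
  φ.MemHinf ∧ ∀ᵐ x ∂μ𝕋, ‖φ.toFun x‖ = 1

/-- The image `θ · H²` of the Hardy space under a scalar multiplication operator. -/
def SymbolS.rangeH2 (φ : SymbolS) : Submodule ℂ L2S :=
  hardyS.map (φ.mulLp : L2S →ₗ[ℂ] L2S)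

/-- The scalar model space `H(θ) = H² ⊖ θH²`. -/
def modelSpaceS (θ : SymbolS) : Submodule ℂ L2S :=
  hardyS ⊓ (θ.rangeH2)ᗮ

/-- The coordinate function `z` on the circle (i.e. `x ↦ e^{ix}`). -/
def circleCoord : 𝕋 → ℂ := fun x => fourier 1 x

/-- The symbol `z` of the unilateral shift. -/
def shiftSymbolS : SymbolS where
  toFun := circleCoord
  meas := (map_continuous (fourier 1)).aestronglyMeasurable
  bound := 1
  le_bound := fun x => le_of_eq (norm_fourier_apply 1 x)

/-- The symbol `z̄`. -/
def coshiftSymbolS : SymbolS where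
  toFun := fun x => fourier (-1) x
  meas := (map_continuous (fourier (-1))).aestronglyMeasurable
  bound := 1
  le_bound := fun x => le_of_eq (norm_fourier_apply (-1) x)

/-- An operator on a complex Hilbert space is hyponormal if its self-commutator
`[T*, T] = T*T - TT*` is a positive operator. -/
def Hyponormal {H : Type*} [NormedAddCommGroup H] [InnerProductSpace ℂ H] [CompleteSpace H]
    (T : H →L[ℂ] H) : Prop :=
  (ContinuousLinearMap.adjoint T ∘L T - T ∘L ContinuousLinearMap.adjoint T).IsPositive

/-- A Blaschke factor `b_a(z) = (z - a)/(1 - āz)`. -/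
def blaschke (a z : ℂ) : ℂ := (z - a) / (1 - conj a * z)

end BlockToeplitz

namespace BlockToeplitz

open MeasureTheory
open scoped ComplexConjugate

section AuxGeneric

local notation "⟪" x ", " y "⟫" => @inner ℂ _ _ x y

/-! ### Generic helpers -/

theorem integral_comp_neg {G : Type*} [NormedAddCommGroup G] [NormedSpace ℝ G]
    (g : 𝕋 → G) : ∫ x, g (-x) ∂μ𝕋 = ∫ x, g x ∂μ𝕋 :=
  (Measure.measurePreserving_neg μ𝕋).integral_comp
    (MeasurableEquiv.neg 𝕋).measurableEmbedding g

theorem ae_comp_neg {G : Type*} {f g : 𝕋 → G} (h : f =ᵐ[μ𝕋] g) :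
    (fun x => f (-x)) =ᵐ[μ𝕋] fun x => g (-x) :=
  (Measure.measurePreserving_neg μ𝕋).quasiMeasurePreserving.ae_eq_comp h

theorem pointwiseCLM_coeFn {E F : Type*} [NormedAddCommGroup E] [NormedSpace ℂ E]
    [NormedAddCommGroup F] [NormedSpace ℂ F]
    (Φ : 𝕋 → (E →L[ℂ] F)) (hm : AEStronglyMeasurable Φ μ𝕋)
    {C : ℝ} (hC : ∀ x, ‖Φ x‖ ≤ C) (f : Lp E 2 μ𝕋) :
    ⇑(pointwiseCLM Φ hm hC f) =ᵐ[μ𝕋] fun x => Φ x (f x) := by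
  rw [pointwiseCLM_apply]
  exact MemLp.coeFn_toLp _

theorem compNeg_coeFn {E : Type*} [NormedAddCommGroup E] [NormedSpace ℂ E] (u : Lp E 2 μ𝕋) :
    ⇑(compNeg E u) =ᵐ[μ𝕋] fun x => u (-x) := by
  have h : compNeg E u
      = Lp.compMeasurePreserving (E := E) (p := 2) Neg.neg
          (Measure.measurePreserving_neg μ𝕋) u := rfl
  rw [h]
  exact Lp.coeFn_compMeasurePreserving u (Measure.measurePreserving_neg μ𝕋)

theorem Jop_coeFn {E : Type*} [NormedAddCommGroup E] [NormedSpace ℂ E] (u : Lp E 2 μ𝕋) :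
    ⇑(Jop E u) =ᵐ[μ𝕋] fun x => (fourier (-1) x : ℂ) • u (-x) := by
  unfold Jop
  rw [ContinuousLinearMap.comp_apply]
  refine (pointwiseCLM_coeFn _ _ _ _).trans ?_
  filter_upwards [compNeg_coeFn u] with x hx
  simp only [ContinuousLinearMap.smul_apply, ContinuousLinearMap.one_apply, hx]

theorem fourier_neg_arg (n : ℤ) (x : 𝕋) : (fourier n (-x) : ℂ) = fourier (-n) x := by
  rw [fourier_apply, smul_neg, fourier_neg', ← fourier_neg]

theorem fourier_neg_one_mul_self (x : 𝕋) :
    (fourier (-1) x : ℂ) * fourier (-1) (-x) = 1 := by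
  rw [fourier_neg_arg, neg_neg, ← fourier_add]
  norm_num

theorem Jop_Jop {E : Type*} [NormedAddCommGroup E] [NormedSpace ℂ E] (u : Lp E 2 μ𝕋) :
    Jop E (Jop E u) = u := by
  apply Lp.ext
  filter_upwards [Jop_coeFn (Jop E u), ae_comp_neg (Jop_coeFn u)] with x hx1 hx2
  rw [hx1]
  have hx2' : (Jop E u) (-x) = (fourier (-1) (-x) : ℂ) • u (-(-x)) := hx2
  rw [hx2', smul_smul, neg_neg, fourier_neg_one_mul_self, one_smul]

theorem Jop_inner {E : Type*} [NormedAddCommGroup E] [InnerProductSpace ℂ E]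
    (u v : Lp E 2 μ𝕋) : ⟪Jop E u, v⟫ = ⟪u, Jop E v⟫ := by
  rw [L2.inner_def, L2.inner_def]
  have h1 : ∫ x, ⟪(Jop E u) x, v x⟫ ∂μ𝕋
      = ∫ x, ⟪(fourier (-1) x : ℂ) • u (-x), v x⟫ ∂μ𝕋 :=
    integral_congr_ae ((Jop_coeFn u).mono fun x hx => by dsimp only at hx ⊢; rw [hx])
  have h2 : ∫ x, ⟪u x, (Jop E v) x⟫ ∂μ𝕋
      = ∫ x, ⟪u x, (fourier (-1) x : ℂ) • v (-x)⟫ ∂μ𝕋 :=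
    integral_congr_ae ((Jop_coeFn v).mono fun x hx => by dsimp only at hx ⊢; rw [hx])
  rw [h1, h2]
  rw [← integral_comp_neg (fun x => ⟪u x, (fourier (-1) x : ℂ) • v (-x)⟫)]
  refine integral_congr_ae (Filter.Eventually.of_forall fun x => ?_)
  dsimp only
  rw [inner_smul_left, inner_smul_right, neg_neg]
  congr 1
  rw [fourier_neg_arg, neg_neg, ← fourier_neg, neg_neg]

theorem Jop_inner_Jop {E : Type*} [NormedAddCommGroup E] [InnerProductSpace ℂ E]
    (u v : Lp E 2 μ𝕋) : ⟪Jop E u, Jop E v⟫ = ⟪u, v⟫ := by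
  rw [Jop_inner, Jop_Jop]

end AuxGeneric

section AuxSymbol

variable {ι : Type} [Fintype ι]

local notation "⟪" x ", " y "⟫" => @inner ℂ _ _ x y

theorem mulLp_coeFn (Φ : Symbol ι) (f : L2 ι) :
    ⇑(Φ.mulLp f) =ᵐ[μ𝕋] fun x => Φ x (f x) := by
  unfold Symbol.mulLp
  exact pointwiseCLM_coeFn _ _ _ _

theorem mulLp_ext {Φ Ψ : Symbol ι} (h : ∀ x, Φ.toFun x = Ψ.toFun x) (u : L2 ι) :
    Φ.mulLp u = Ψ.mulLp u := by
  apply Lp.ext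
  filter_upwards [mulLp_coeFn Φ u, mulLp_coeFn Ψ u] with x h1 h2
  rw [h1, h2, h]

theorem mulLp_mul (Φ Ψ : Symbol ι) (u : L2 ι) :
    (Φ.mul Ψ).mulLp u = Φ.mulLp (Ψ.mulLp u) := by
  apply Lp.ext
  filter_upwards [mulLp_coeFn (Φ.mul Ψ) u, mulLp_coeFn Φ (Ψ.mulLp u),
    mulLp_coeFn Ψ u] with x h1 h2 h3
  rw [h1, h2, h3]
  rfl

theorem mulLp_inner (Φ : Symbol ι) (u v : L2 ι) :
    ⟪Φ.mulLp u, v⟫ = ⟪u, Φ.star.mulLp v⟫ := by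
  rw [L2.inner_def, L2.inner_def]
  have h1 : ∫ x, ⟪(Φ.mulLp u) x, v x⟫ ∂μ𝕋 = ∫ x, ⟪Φ x (u x), v x⟫ ∂μ𝕋 :=
    integral_congr_ae ((mulLp_coeFn Φ u).mono fun x hx => by dsimp only at hx ⊢; rw [hx])
  have h2 : ∫ x, ⟪u x, (Φ.star.mulLp v) x⟫ ∂μ𝕋
      = ∫ x, ⟪u x, ContinuousLinearMap.adjoint (Φ x) (v x)⟫ ∂μ𝕋 :=
    integral_congr_ae ((mulLp_coeFn Φ.star v).mono fun x hx => by dsimp only at hx ⊢; rw [hx]; rfl)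
  rw [h1, h2]
  refine integral_congr_ae (Filter.Eventually.of_forall fun x => ?_)
  dsimp only
  rw [ContinuousLinearMap.adjoint_inner_right]

theorem mulLp_inner_isometry {Θ : Symbol ι}
    (hΘ : ∀ᵐ x ∂μ𝕋, (ContinuousLinearMap.adjoint (Θ.toFun x)).comp (Θ.toFun x) = 1)
    (u v : L2 ι) : ⟪Θ.mulLp u, Θ.mulLp v⟫ = ⟪u, v⟫ := by
  rw [L2.inner_def, L2.inner_def]
  refine integral_congr_ae ?_
  filter_upwards [mulLp_coeFn Θ u, mulLp_coeFn Θ v, hΘ] with x h1 h2 h3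
  rw [h1, h2, ← ContinuousLinearMap.adjoint_inner_right]
  have := congrArg (fun T : V ι →L[ℂ] V ι => ⟪u x, T (v x)⟫) h3
  simpa using this

theorem Jop_mulLp (Φ : Symbol ι) (u : L2 ι) :
    Jop (V ι) (Φ.mulLp u) = Φ.tilde.star.mulLp (Jop (V ι) u) := by
  apply Lp.ext
  filter_upwards [Jop_coeFn (Φ.mulLp u), ae_comp_neg (mulLp_coeFn Φ u),
    mulLp_coeFn Φ.tilde.star (Jop (V ι) u), Jop_coeFn u] with x h1 h2 h3 h4
  rw [h1, h3, h4]
  have h2' : (Φ.mulLp u) (-x) = Φ.toFun (-x) (u (-x)) := h2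
  rw [h2']
  show (fourier (-1) x : ℂ) • Φ.toFun (-x) (u (-x))
      = (ContinuousLinearMap.adjoint (ContinuousLinearMap.adjoint (Φ.toFun (-x))))
          ((fourier (-1) x : ℂ) • u (-x))
  rw [ContinuousLinearMap.adjoint_adjoint]
  exact ((Φ.toFun (-x)).map_smul _ _).symm

end AuxSymbol

section AuxHardy

variable {ι : Type} [Fintype ι]

local notation "⟪" x ", " y "⟫" => @inner ℂ _ _ x y

/-- The vector monomial with the `Classical.decEq` instance. -/
noncomputable def FV (k : ℤ) (i : ι) : L2 ι := @fourierV ι _ (Classical.decEq ι) k i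

/-- The basis vector with the `Classical.decEq` instance. -/
noncomputable def e1 (i : ι) : V ι := @EuclideanSpace.single ι ℂ _ (Classical.decEq ι) i 1

theorem FV_coeFn (k : ℤ) (i : ι) :
    ⇑(FV (ι := ι) k i) =ᵐ[μ𝕋] fun x => (fourier k x : ℂ) • e1 i := by
  unfold FV fourierV e1
  exact ContinuousMap.coeFn_toLp (E := V ι) (𝕜 := ℂ) (p := 2) (μ := μ𝕋) _

theorem Jop_FV (k : ℤ) (i : ι) :
    Jop (V ι) (FV (ι := ι) k i) = FV (-1 - k) i := by
  apply Lp.ext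
  filter_upwards [Jop_coeFn (FV (ι := ι) k i), ae_comp_neg (FV_coeFn (ι := ι) k i),
    FV_coeFn (ι := ι) (-1 - k) i] with x h1 h2 h3
  rw [h1, h3]
  have h2' : (FV (ι := ι) k i) (-x) = (fourier k (-x) : ℂ) • e1 i := h2
  rw [h2', smul_smul]
  congr 1
  rw [fourier_neg_arg, ← fourier_add, sub_eq_add_neg]

theorem FV_inner_FV {k m : ℤ} (h : k ≠ m) (i j : ι) :
    ⟪FV (ι := ι) k i, FV (ι := ι) m j⟫ = 0 := by
  have horth : (⟪@fourierLp (2 * π) _ 2 _ k, @fourierLp (2 * π) _ 2 _ m⟫ : ℂ) = 0 := by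
    have := orthonormal_iff_ite.mp (orthonormal_fourier (T := 2 * π)) k m
    rwa [if_neg h] at this
  have hint : ∫ x : 𝕋, (starRingEnd ℂ) (fourier k x) * fourier m x ∂μ𝕋 = 0 := by
    rw [← horth, L2.inner_def]
    refine integral_congr_ae ?_
    filter_upwards [coeFn_fourierLp 2 k, coeFn_fourierLp 2 m] with x h1 h2
    rw [h1, h2, RCLike.inner_apply, mul_comm]
  rw [L2.inner_def]
  have : ∫ x : 𝕋, ⟪(FV (ι := ι) k i) x, (FV (ι := ι) m j) x⟫ ∂μ𝕋
      = ∫ x : 𝕋, ((starRingEnd ℂ) (fourier k x) * fourier m x) • ⟪e1 (ι := ι) i, e1 j⟫ ∂μ𝕋 := by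
    refine integral_congr_ae ?_
    filter_upwards [FV_coeFn (ι := ι) k i, FV_coeFn (ι := ι) m j] with x h1 h2
    rw [h1, h2, inner_smul_left, inner_smul_right, smul_eq_mul]
    ring
  rw [this, integral_smul_const, hint, zero_smul]

theorem mem_orthogonal_span {E : Type*} [NormedAddCommGroup E] [InnerProductSpace ℂ E]
    {s : Set E} {x : E} (h : ∀ v ∈ s, ⟪v, x⟫ = 0) : x ∈ (Submodule.span ℂ s)ᗮ := by
  rw [Submodule.mem_orthogonal]
  intro u hu
  induction hu using Submodule.span_induction with
  | mem v hv => exact h v hv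
  | zero => exact inner_zero_left x
  | add a b _ _ ha hb => rw [inner_add_left, ha, hb, add_zero]
  | smul c a _ ha => rw [inner_smul_left, ha, mul_zero]

theorem mem_orthogonal_closure {E : Type*} [NormedAddCommGroup E] [InnerProductSpace ℂ E]
    {K : Submodule ℂ E} {x : E} (h : x ∈ Kᗮ) : x ∈ K.topologicalClosureᗮ := by
  rw [Submodule.mem_orthogonal]
  intro u hu
  have hclosed : IsClosed {u : E | ⟪u, x⟫ = 0} :=
    isClosed_eq (continuous_inner.comp (continuous_id.prodMk continuous_const))
      continuous_const
  exact hclosed.closure_subset_iff.mpr (fun v hv => (Submodule.mem_orthogonal _ _).mp h v hv) hu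

theorem FV_mem_negSpan {k : ℤ} (hk : k < 0) (i : ι) : FV (ι := ι) k i ∈ negSpan ι :=
  Submodule.subset_span ⟨k, hk, i, rfl⟩

theorem FV_mem_hardy {m : ℤ} (hm : 0 ≤ m) (i : ι) : FV (ι := ι) m i ∈ hardy ι := by
  unfold hardy negSpan
  refine mem_orthogonal_span fun v hv => ?_
  obtain ⟨k, hk, j, rfl⟩ := hv
  exact FV_inner_FV (by omega) j i

/-- The span of nonnegative monomials. -/
noncomputable def posSpan (ι : Type) [Fintype ι] : Submodule ℂ (L2 ι) :=
  Submodule.span ℂ {f | ∃ k : ℤ, 0 ≤ k ∧ ∃ i : ι, f = FV k i}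

/-- The coordinate operator `L²(ℂ^ι) → L²(ℂ)`. -/
noncomputable def coordCLM (i : ι) : L2 ι →L[ℂ] L2S :=
  pointwiseCLM (fun _ => innerSL ℂ (e1 i)) aestronglyMeasurable_const
    (C := ‖innerSL ℂ (e1 (ι := ι) i)‖) (fun _ => le_rfl)

theorem coordCLM_coeFn (i : ι) (v : L2 ι) :
    ⇑(coordCLM i v) =ᵐ[μ𝕋] fun x => ⟪e1 (ι := ι) i, v x⟫ := by
  refine (pointwiseCLM_coeFn (fun _ : 𝕋 => innerSL ℂ (e1 (ι := ι) i))
    aestronglyMeasurable_const (fun _ => le_rfl) v).trans ?_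
  exact Filter.Eventually.of_forall fun x => rfl

theorem coordCLM_inner (i : ι) (k : ℤ) (v : L2 ι) :
    ⟪fourierLp 2 k, coordCLM i v⟫ = ⟪FV (ι := ι) k i, v⟫ := by
  rw [L2.inner_def, L2.inner_def]
  refine integral_congr_ae ?_
  filter_upwards [coeFn_fourierLp 2 k, coordCLM_coeFn i v, FV_coeFn (ι := ι) k i]
    with x h1 h2 h3
  simp only [h1, h2, h3, inner_smul_left, RCLike.inner_apply]
  ring

theorem totality (v : L2 ι) (h : ∀ (k : ℤ) (i : ι), ⟪FV (ι := ι) k i, v⟫ = 0) : v = 0 := by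
  have hcoord : ∀ i : ι, coordCLM i v = 0 := by
    intro i
    have hw : coordCLM i v ∈ (Submodule.span ℂ (Set.range (@fourierLp (2 * π) _ 2 _)))ᗮ := by
      refine mem_orthogonal_span fun u hu => ?_
      obtain ⟨k, rfl⟩ := hu
      rw [coordCLM_inner]
      exact h k i
    have hw2 := mem_orthogonal_closure hw
    rw [span_fourierLp_closure_eq_top (by norm_num)] at hw2
    have : coordCLM i v ∈ (⊥ : Submodule ℂ L2S) := by
      rwa [Submodule.top_orthogonal_eq_bot] at hw2
    simpa using this
  apply Lp.ext
  have hae : ∀ i : ι, ∀ᵐ x ∂μ𝕋, ⟪e1 (ι := ι) i, v x⟫ = 0 := by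
    intro i
    have h2 : ⇑(coordCLM i v) =ᵐ[μ𝕋] (0 : 𝕋 → ℂ) := by
      rw [hcoord i]; exact Lp.coeFn_zero _ _ _
    filter_upwards [coordCLM_coeFn i v, h2] with x hx1 hx2
    rw [← hx1, hx2]
    rfl
  have hall : ∀ᵐ x ∂μ𝕋, ∀ i : ι, ⟪e1 (ι := ι) i, v x⟫ = 0 := ae_all_iff.mpr hae
  filter_upwards [hall, Lp.coeFn_zero (V ι) 2 μ𝕋] with x hx hzero
  rw [hzero]
  have hv : ∀ i : ι, v x i = 0 := by
    intro i
    letI := Classical.decEq ι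
    have := hx i
    unfold e1 at this
    rwa [EuclideanSpace.inner_single_left, map_one, one_mul] at this
  ext i
  simpa using hv i

theorem hardy_le_posClosure : hardy ι ≤ (posSpan ι).topologicalClosure := by
  intro h hh
  haveI : CompleteSpace ((posSpan ι).topologicalClosure) :=
    (posSpan ι).isClosed_topologicalClosure.completeSpace_coe
  set M := (posSpan ι).topologicalClosure with hM
  set Ph := orthogonalProjection M h with hPh
  have hd : h - ↑Ph ∈ Mᗮ := M.sub_starProjection_mem_orthogonal h
  have hzero : h - ↑Ph = 0 := by
    apply totality
    intro k i
    rcases le_or_gt 0 k with hk | hk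
    · refine (Submodule.mem_orthogonal M _).mp hd _ ?_
      exact (posSpan ι).le_topologicalClosure (Submodule.subset_span ⟨k, hk, i, rfl⟩)
    · rw [inner_sub_right]
      have h1 : ⟪FV (ι := ι) k i, h⟫ = 0 :=
        (Submodule.mem_orthogonal _ _).mp hh _ (FV_mem_negSpan hk i)
      have h2 : ⟪FV (ι := ι) k i, (Ph : L2 ι)⟫ = 0 := by
        have hFV : FV (ι := ι) k i ∈ Mᗮ := by
          rw [hM]
          refine mem_orthogonal_closure ?_
          refine mem_orthogonal_span fun u hu => ?_
          obtain ⟨m, hm, j, rfl⟩ := hu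
          exact FV_inner_FV (by omega) j i
        exact (Submodule.mem_orthogonal' _ _).mp hFV _ Ph.2
      rw [h1, h2, sub_zero]
  have : h = ↑Ph := by rwa [sub_eq_zero] at hzero
  rw [this]
  exact Ph.2

theorem Jop_mem_hardy {u : L2 ι} (hu : u ∈ (hardy ι)ᗮ) : Jop (V ι) u ∈ hardy ι := by
  have hclos : (hardy ι)ᗮ = (negSpan ι).topologicalClosure :=
    Submodule.orthogonal_orthogonal_eq_closure (K := negSpan ι)
  rw [hclos] at hu
  have himg : (Jop (V ι)) '' (negSpan ι : Set (L2 ι)) ⊆ (hardy ι : Set (L2 ι)) := by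
    rintro y ⟨z, hz, rfl⟩
    have : (negSpan ι).map (Jop (V ι) : L2 ι →ₗ[ℂ] L2 ι) ≤ hardy ι := by
      unfold negSpan
      rw [Submodule.map_span, Submodule.span_le]
      rintro y ⟨w, ⟨k, hk, i, rfl⟩, rfl⟩
      show Jop (V ι) (FV k i) ∈ hardy ι
      rw [Jop_FV]
      exact FV_mem_hardy (by omega) i
    exact this ⟨z, hz, rfl⟩
  have hJu : Jop (V ι) u ∈ closure ((Jop (V ι)) '' (negSpan ι : Set (L2 ι))) := by
    have : Jop (V ι) u ∈ (Jop (V ι)) '' closure (negSpan ι : Set (L2 ι)) :=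
      Set.mem_image_of_mem _ hu
    exact (image_closure_subset_closure_image (Jop (V ι)).continuous) this
  have : closure ((Jop (V ι)) '' (negSpan ι : Set (L2 ι))) ⊆ (hardy ι : Set (L2 ι)) := by
    refine closure_minimal himg ?_
    unfold hardy
    exact Submodule.isClosed_orthogonal _
  exact this hJu

theorem Jop_mem_orthogonal {u : L2 ι} (hu : u ∈ hardy ι) :
    Jop (V ι) u ∈ (hardy ι)ᗮ := by
  have hu2 : u ∈ (posSpan ι).topologicalClosure := hardy_le_posClosure hu
  have himg : (Jop (V ι)) '' (posSpan ι : Set (L2 ι)) ⊆ ((hardy ι)ᗮ : Set (L2 ι)) := by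
    rintro y ⟨z, hz, rfl⟩
    have : (posSpan ι).map (Jop (V ι) : L2 ι →ₗ[ℂ] L2 ι) ≤ (hardy ι)ᗮ := by
      unfold posSpan
      rw [Submodule.map_span, Submodule.span_le]
      rintro y ⟨w, ⟨k, hk, i, rfl⟩, rfl⟩
      show Jop (V ι) (FV k i) ∈ (hardy ι)ᗮ
      rw [Jop_FV]
      have : FV (ι := ι) (-1 - k) i ∈ negSpan ι := FV_mem_negSpan (by omega) i
      exact Submodule.le_orthogonal_orthogonal (negSpan ι) this
    exact this ⟨z, hz, rfl⟩
  have hJu : Jop (V ι) u ∈ closure ((Jop (V ι)) '' (posSpan ι : Set (L2 ι))) :=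
    (image_closure_subset_closure_image (Jop (V ι)).continuous) (Set.mem_image_of_mem _ hu2)
  have : closure ((Jop (V ι)) '' (posSpan ι : Set (L2 ι))) ⊆ ((hardy ι)ᗮ : Set (L2 ι)) :=
    closure_minimal himg (Submodule.isClosed_orthogonal _)
  exact this hJu

end AuxHardy

section AuxHankel

variable {ι : Type} [Fintype ι]

local notation "⟪" x ", " y "⟫" => @inner ℂ _ _ x y

/-- The complementary projection `Q = I - ι P` as a map on `L²`. -/
noncomputable def Qc (u : L2 ι) : L2 ι := u - ↑(hardyProj ι u)

theorem Qc_mem_orthogonal (u : L2 ι) : Qc u ∈ (hardy ι)ᗮ :=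
  (hardy ι).sub_starProjection_mem_orthogonal u

theorem proj_coe_of_mem {u : L2 ι} (hu : u ∈ hardy ι) : (↑(hardyProj ι u) : L2 ι) = u :=
  (hardy ι).starProjection_eq_self_iff.mpr hu

theorem proj_of_mem_orthogonal {u : L2 ι} (hu : u ∈ (hardy ι)ᗮ) : hardyProj ι u = 0 :=
  orthogonalProjection_mem_subspace_orthogonalComplement_eq_zero hu

theorem Qc_of_mem_hardy {u : L2 ι} (hu : u ∈ hardy ι) : Qc u = 0 := by
  rw [Qc, proj_coe_of_mem hu, sub_self]

theorem Qc_of_mem_orthogonal {u : L2 ι} (hu : u ∈ (hardy ι)ᗮ) : Qc u = u := by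
  rw [Qc, proj_of_mem_orthogonal hu, Submodule.coe_zero, sub_zero]

theorem Qc_eq_of_sub_mem {a b : L2 ι} (h : a - b ∈ hardy ι) : Qc a = Qc b := by
  unfold Qc
  have : hardyProj ι a = hardyProj ι (a - b) + hardyProj ι b := by
    rw [← map_add]; congr 1; abel
  rw [this]
  push_cast [proj_coe_of_mem h]
  abel

theorem hankel_coe (Φ : Symbol ι) (f : H2 ι) :
    (↑(hankel Φ f) : L2 ι) = Jop (V ι) (Qc (Φ.mulLp ↑f)) := by
  have : hankel Φ f = hardyProj ι (Jop (V ι) (Qc (Φ.mulLp ↑f))) := by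
    unfold hankel Qc hardyProj
    simp only [ContinuousLinearMap.comp_apply, ContinuousLinearMap.sub_apply,
      ContinuousLinearMap.id_apply, Submodule.subtypeL_apply]
  rw [this]
  exact proj_coe_of_mem (Jop_mem_hardy (Qc_mem_orthogonal _))

theorem inner_split {pa qa pb qb : L2 ι} (hpa : pa ∈ hardy ι) (hqa : qa ∈ (hardy ι)ᗮ)
    (hpb : pb ∈ hardy ι) (hqb : qb ∈ (hardy ι)ᗮ) :
    ⟪pa + qa, pb + qb⟫ = ⟪pa, pb⟫ + ⟪qa, qb⟫ := by
  rw [inner_add_left, inner_add_right, inner_add_right]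
  have h1 : ⟪pa, qb⟫ = 0 := (Submodule.mem_orthogonal _ _).mp hqb pa hpa
  have h2 : ⟪qa, pb⟫ = 0 := (Submodule.mem_orthogonal' _ _).mp hqa pb hpb
  rw [h1, h2]
  ring

theorem inner_proj_split (a b : L2 ι) :
    ⟪a, b⟫ = ⟪(↑(hardyProj ι a) : L2 ι), ↑(hardyProj ι b)⟫ + ⟪Qc a, Qc b⟫ := by
  have ha : a = ↑(hardyProj ι a) + Qc a := by rw [Qc]; abel
  have hb : b = ↑(hardyProj ι b) + Qc b := by rw [Qc]; abel
  calc ⟪a, b⟫ = ⟪(↑(hardyProj ι a) : L2 ι) + Qc a, (↑(hardyProj ι b) : L2 ι) + Qc b⟫ := by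
        rw [← ha, ← hb]
    _ = _ := inner_split (hardyProj ι a).2 (Qc_mem_orthogonal a)
        (hardyProj ι b).2 (Qc_mem_orthogonal b)

theorem inner_hankel (Φ : Symbol ι) (f g : H2 ι) :
    ⟪hankel Φ f, hankel Φ g⟫ = ⟪Qc (Φ.mulLp ↑f), Qc (Φ.mulLp ↑g)⟫ := by
  rw [Submodule.coe_inner, hankel_coe, hankel_coe, Jop_inner_Jop]

theorem adjoint_hankel (Φ : Symbol ι) :
    ContinuousLinearMap.adjoint (hankel Φ) = hankel Φ.tilde := by
  symm
  rw [ContinuousLinearMap.eq_adjoint_iff]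
  intro f g
  have key : ∀ (Ψ : Symbol ι) (h : H2 ι) (w : L2 ι),
      ⟪(↑(hankel Ψ h) : L2 ι), w⟫ = ⟪Ψ.mulLp ↑h, Jop (V ι) w⟫ - 
        ⟪(↑(hardyProj ι (Ψ.mulLp ↑h)) : L2 ι), Jop (V ι) w⟫ := by
    intro Ψ h w
    rw [hankel_coe, Jop_inner, Qc, inner_sub_left]
  rw [Submodule.coe_inner, Submodule.coe_inner]
  rw [hankel_coe, Jop_inner, Qc, inner_sub_left]
  have hz1 : ⟪(↑(hardyProj ι (Φ.tilde.mulLp ↑f)) : L2 ι), Jop (V ι) ↑g⟫ = 0 :=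
    (Submodule.mem_orthogonal _ _).mp (Jop_mem_orthogonal g.2) _ (hardyProj ι _).2
  rw [hz1, sub_zero, mulLp_inner]
  have hmove : Φ.tilde.star.mulLp (Jop (V ι) (↑g : L2 ι)) = Jop (V ι) (Φ.mulLp ↑g) :=
    (Jop_mulLp Φ (↑g : L2 ι)).symm
  rw [hmove]
  -- now the right-hand side
  rw [hankel_coe]
  have : Jop (V ι) (Qc (Φ.mulLp ↑g)) = Jop (V ι) (Φ.mulLp ↑g)
      - Jop (V ι) (↑(hardyProj ι (Φ.mulLp ↑g)) : L2 ι) := by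
    rw [Qc, map_sub]
  rw [this, inner_sub_right]
  have hz2 : ⟪(↑f : L2 ι), Jop (V ι) (↑(hardyProj ι (Φ.mulLp ↑g)) : L2 ι)⟫ = 0 :=
    (Submodule.mem_orthogonal _ _).mp (Jop_mem_orthogonal (hardyProj ι _).2) _ f.2
  rw [hz2, sub_zero]

theorem hankel_comp_coe (Θ Φ : Symbol ι) (f : H2 ι) :
    (↑(hankel Θ.star.tilde (hankel Φ f)) : L2 ι)
      = ↑(hardyProj ι (Θ.mulLp (Qc (Φ.mulLp ↑f)))) := by
  set q := Qc (Φ.mulLp (↑f : L2 ι)) with hq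
  have hqmem : q ∈ (hardy ι)ᗮ := Qc_mem_orthogonal _
  rw [hankel_coe, hankel_coe]
  have h1 : Θ.star.tilde.mulLp (Jop (V ι) q) = Jop (V ι) (Θ.mulLp q) := by
    rw [Jop_mulLp Θ q]
    exact mulLp_ext (fun x => rfl) _
  rw [h1]
  have hdecomp : Θ.mulLp q = ↑(hardyProj ι (Θ.mulLp q)) + Qc (Θ.mulLp q) := by
    rw [Qc]; abel
  have h2 : Qc (Jop (V ι) (Θ.mulLp q)) = Jop (V ι) (↑(hardyProj ι (Θ.mulLp q)) : L2 ι) := by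
    have hJsplit : Jop (V ι) (Θ.mulLp q)
        = Jop (V ι) (↑(hardyProj ι (Θ.mulLp q)) : L2 ι) + Jop (V ι) (Qc (Θ.mulLp q)) := by
      rw [← map_add, ← hdecomp]
    have ha : Jop (V ι) (↑(hardyProj ι (Θ.mulLp q)) : L2 ι) ∈ (hardy ι)ᗮ :=
      Jop_mem_orthogonal (hardyProj ι _).2
    have hb : Jop (V ι) (Qc (Θ.mulLp q)) ∈ hardy ι :=
      Jop_mem_hardy (Qc_mem_orthogonal _)
    have : Jop (V ι) (Θ.mulLp q) - Jop (V ι) (↑(hardyProj ι (Θ.mulLp q)) : L2 ι)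
        ∈ hardy ι := by
      rw [hJsplit]; simpa using hb
    have hQ1 : Qc (Jop (V ι) (Θ.mulLp q))
        = Qc (Jop (V ι) (↑(hardyProj ι (Θ.mulLp q)) : L2 ι)) := by
      apply Qc_eq_of_sub_mem this
    rw [hQ1, Qc_of_mem_orthogonal ha]
  rw [h2, Jop_Jop]

end AuxHankel


/-- If `Θ ∈ H^∞_{M_n}` is inner and `Φ ∈ L^∞_{M_n}`, then
`H_Φ^* H_Φ - H_{ΘΦ}^* H_{ΘΦ} = H_Φ^* H_{Θ*} H_{Θ*}^* H_Φ`. -/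
theorem statement2 (ι : Type) [Fintype ι] (Θ Φ : Symbol ι) (hΘ : Θ.IsInner) :
    (ContinuousLinearMap.adjoint (hankel Φ)).comp (hankel Φ)
        - (ContinuousLinearMap.adjoint (hankel (Θ.mul Φ))).comp (hankel (Θ.mul Φ))
      = (ContinuousLinearMap.adjoint (hankel Φ)).comp
          ((hankel Θ.star).comp
            ((ContinuousLinearMap.adjoint (hankel Θ.star)).comp (hankel Φ))) := by
  obtain ⟨hH, hI⟩ := hΘ
  apply ContinuousLinearMap.ext
  intro f
  apply ext_inner_right ℂ
  intro g
  simp only [ContinuousLinearMap.sub_apply, ContinuousLinearMap.comp_apply]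
  rw [inner_sub_left, ContinuousLinearMap.adjoint_inner_left,
    ContinuousLinearMap.adjoint_inner_left, ContinuousLinearMap.adjoint_inner_left,
    ← ContinuousLinearMap.adjoint_inner_right (hankel Θ.star), adjoint_hankel Θ.star]
  rw [inner_hankel Φ f g, inner_hankel (Θ.mul Φ) f g]
  rw [Submodule.coe_inner, hankel_comp_coe, hankel_comp_coe]
  have hmul : ∀ h : H2 ι, Qc ((Θ.mul Φ).mulLp (↑h : L2 ι)) = Qc (Θ.mulLp (Qc (Φ.mulLp ↑h))) := by
    intro h
    rw [mulLp_mul]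
    apply Qc_eq_of_sub_mem
    have hdiff : Θ.mulLp (Φ.mulLp (↑h : L2 ι)) - Θ.mulLp (Qc (Φ.mulLp ↑h))
        = Θ.mulLp (↑(hardyProj ι (Φ.mulLp ↑h)) : L2 ι) := by
      rw [← map_sub]; congr 1; rw [Qc]; abel
    rw [hdiff]
    exact hH _ (hardyProj ι _).2
  rw [hmul f, hmul g]
  have hsplit := inner_proj_split (Θ.mulLp (Qc (Φ.mulLp (↑f : L2 ι))))
    (Θ.mulLp (Qc (Φ.mulLp (↑g : L2 ι))))
  have hiso := mulLp_inner_isometry hI (Qc (Φ.mulLp (↑f : L2 ι))) (Qc (Φ.mulLp (↑g : L2 ι)))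
  rw [← hiso, hsplit]
  ring

end BlockToeplitz
end
end

section
/- For inner functions θ₁, θ₂, θ₃ on 𝔻: if θ₁ · H(θ₂) ⊆ H(θ₃), then either θ₂ is constant or θ₁θ₂ divides θ₃. In particular, if θ₁ · H(θ₂) ⊆ H(θ₁), then θ₁ or θ₂ is constant. -/
open MeasureTheory Complex Real InnerProductSpace Submodule

set_option maxHeartbeats 1000000
set_option synthInstance.maxHeartbeats 200000

noncomputable section

namespace BlockToeplitz

open scoped ComplexConjugate
open Filter MeasureTheory

/-! ### Basic helper lemmas -/

theorem conj_fourier (m : ℤ) (x : 𝕋) : conj (fourier m x) = fourier (-m) x :=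
  fourier_neg.symm

theorem conj_mul_self_one {z : ℂ} (h : ‖z‖ = 1) : conj z * z = 1 := by
  rw [mul_comm, Complex.mul_conj]
  norm_cast
  rw [Complex.normSq_eq_norm_sq, h, one_pow]

theorem mulLp_coeFn_s14 (φ : SymbolS) (f : L2S) :
    (φ.mulLp f : 𝕋 → ℂ) =ᵐ[μ𝕋] fun x => φ.toFun x * f x := by
  unfold SymbolS.mulLp
  rw [pointwiseCLM_apply]
  filter_upwards [MemLp.coeFn_toLp (memLp_pointwise
    (φ.meas.smul aestronglyMeasurable_const) (fun x => by
      calc ‖φ.toFun x • (1 : ℂ →L[ℂ] ℂ)‖ ≤ ‖φ.toFun x‖ * ‖(1 : ℂ →L[ℂ] ℂ)‖ :=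
            ContinuousLinearMap.opNorm_smul_le _ _
        _ = ‖φ.toFun x‖ := by rw [norm_one, mul_one]
        _ ≤ φ.bound := φ.le_bound x) f)] with x hx
  refine hx.trans ?_
  simp

theorem integrable_lp (f : L2S) : Integrable (fun x => (f : 𝕋 → ℂ) x) μ𝕋 :=
  MemLp.integrable one_le_two (Lp.memLp f)

theorem integrable_fourier_mul {f : 𝕋 → ℂ} (hf : Integrable f μ𝕋) (m : ℤ) :
    Integrable (fun x => fourier m x * f x) μ𝕋 :=
  hf.bdd_mul (map_continuous (fourier m)).aestronglyMeasurable
    (Eventually.of_forall fun x => le_of_eq (norm_fourier_apply m x))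

theorem symbol_integrable (θ : SymbolS) : Integrable θ.toFun μ𝕋 :=
  ⟨θ.meas, HasFiniteIntegral.of_bounded (C := θ.bound) (Eventually.of_forall θ.le_bound)⟩

theorem fourierCoeff_eq_integral (g : 𝕋 → ℂ) (k : ℤ) :
    fourierCoeff g k = ∫ x, fourier (-k) x * g x ∂μ𝕋 := by
  unfold fourierCoeff
  exact integral_congr_ae (Eventually.of_forall fun _ => rfl)

theorem fourierCoeff_congr {f g : 𝕋 → ℂ} (h : f =ᵐ[μ𝕋] g) (n : ℤ) :
    fourierCoeff f n = fourierCoeff g n := by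
  unfold fourierCoeff
  exact integral_congr_ae (h.mono fun x hx => by dsimp only; rw [hx])

theorem integral_fourier (n : ℤ) :
    ∫ x, fourier n x ∂μ𝕋 = if n = 0 then 1 else 0 := by
  have h := orthonormal_iff_ite.mp (orthonormal_fourier (T := 2 * π)) 0 n
  rw [MeasureTheory.L2.inner_def] at h
  have h2 : (∫ x, (inner ℂ ((fourierLp (T := 2 * π) 2 0 : L2S) x)
      ((fourierLp (T := 2 * π) 2 n : L2S) x) : ℂ) ∂μ𝕋) = ∫ x, fourier n x ∂μ𝕋 := by
    refine integral_congr_ae ?_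
    filter_upwards [coeFn_fourierLp (T := 2 * π) 2 0, coeFn_fourierLp (T := 2 * π) 2 n]
      with x h0 hn
    rw [RCLike.inner_apply', h0, hn, fourier_zero, map_one, one_mul]
  rw [h2] at h
  rw [h]
  simp [eq_comm]

theorem fourierCoeff_fourier (m k : ℤ) :
    fourierCoeff (fun x => fourier m x : 𝕋 → ℂ) k = if k = m then 1 else 0 := by
  rw [fourierCoeff_eq_integral]
  have h : ∀ x : 𝕋, fourier (-k) x * fourier m x = fourier (m - k) x := fun x => by
    rw [← fourier_add]; congr 1; ring
  simp_rw [h]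
  rw [integral_fourier]
  by_cases hkm : k = m
  · simp [hkm]
  · rw [if_neg hkm, if_neg fun hc => hkm (sub_eq_zero.mp hc).symm]

theorem fourierCoeff_fourier_mul (m k : ℤ) (f : 𝕋 → ℂ) :
    fourierCoeff (fun x => fourier m x * f x) k = fourierCoeff f (k - m) := by
  rw [fourierCoeff_eq_integral, fourierCoeff_eq_integral]
  refine integral_congr_ae (Eventually.of_forall fun x => ?_)
  dsimp only
  rw [← mul_assoc, ← fourier_add]
  congr 2
  ring

theorem fourierCoeff_conj (f : 𝕋 → ℂ) (k : ℤ) :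
    fourierCoeff (fun x => conj (f x)) k = conj (fourierCoeff f (-k)) := by
  rw [fourierCoeff_eq_integral, fourierCoeff_eq_integral, ← integral_conj]
  refine integral_congr_ae (Eventually.of_forall fun x => ?_)
  dsimp only
  rw [map_mul, conj_fourier, neg_neg]

theorem fourierCoeff_sub {f g : 𝕋 → ℂ} (hf : Integrable f μ𝕋) (hg : Integrable g μ𝕋)
    (k : ℤ) : fourierCoeff (fun x => f x - g x) k = fourierCoeff f k - fourierCoeff g k := by
  rw [fourierCoeff_eq_integral, fourierCoeff_eq_integral, fourierCoeff_eq_integral]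
  rw [← integral_sub (integrable_fourier_mul hf _) (integrable_fourier_mul hg _)]
  exact integral_congr_ae (Eventually.of_forall fun x => by ring)

theorem fourierCoeff_sum {s : Finset ℕ} {g : ℕ → 𝕋 → ℂ}
    (hg : ∀ j ∈ s, Integrable (g j) μ𝕋) (k : ℤ) :
    fourierCoeff (fun x => ∑ j ∈ s, g j x) k = ∑ j ∈ s, fourierCoeff (g j) k := by
  rw [fourierCoeff_eq_integral]
  simp_rw [Finset.mul_sum]
  rw [integral_finset_sum s (fun j hj => integrable_fourier_mul (hg j hj) _)]
  exact Finset.sum_congr rfl fun j hj => (fourierCoeff_eq_integral (g j) k).symm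

/-! ### The Hardy space via Fourier coefficients -/

theorem inner_fourierLp (k : ℤ) (f : L2S) :
    (inner ℂ (fourierLp (T := 2 * π) 2 k : L2S) f : ℂ) = fourierCoeff (f : 𝕋 → ℂ) k := by
  rw [← fourierBasis_repr, HilbertBasis.repr_apply_apply, coe_fourierBasis]

theorem mem_hardyS_iff {f : L2S} :
    f ∈ hardyS ↔ ∀ k : ℤ, k < 0 → fourierCoeff (f : 𝕋 → ℂ) k = 0 := by
  constructor
  · intro hf k hk
    rw [← inner_fourierLp]
    exact (Submodule.mem_orthogonal negSpanS f).mp hf _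
      (Submodule.subset_span ⟨k, hk, rfl⟩)
  · intro h
    refine (Submodule.mem_orthogonal negSpanS f).mpr ?_
    intro u hu
    refine Submodule.span_induction (p := fun u _ => (inner ℂ u f : ℂ) = 0) ?_ ?_ ?_ ?_ hu
    · rintro u ⟨k, hk, rfl⟩
      rw [inner_fourierLp]
      exact h k hk
    · exact inner_zero_left f
    · intro x y _ _ hx hy
      rw [inner_add_left, hx, hy, add_zero]
    · intro c x _ hx
      rw [inner_smul_left, hx, mul_zero]

theorem one_mem_hardyS : (fourierLp (T := 2 * π) 2 0 : L2S) ∈ hardyS := by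
  rw [mem_hardyS_iff]
  intro k hk
  rw [fourierCoeff_congr (coeFn_fourierLp (T := 2 * π) 2 0)]
  rw [show (⇑(fourier (T := 2 * π) 0)) = (fun x => fourier 0 x : 𝕋 → ℂ) from rfl]
  rw [fourierCoeff_fourier]
  exact if_neg hk.ne

theorem symbol_coeff_neg (θ : SymbolS) (hθ : θ.MemHinf) {k : ℤ} (hk : k < 0) :
    fourierCoeff θ.toFun k = 0 := by
  have h1 : θ.mulLp (fourierLp (T := 2 * π) 2 0) ∈ hardyS := hθ _ one_mem_hardyS
  have h2 := mem_hardyS_iff.mp h1 k hk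
  rw [fourierCoeff_congr (mulLp_coeFn_s14 θ (fourierLp (T := 2 * π) 2 0))] at h2
  rw [← h2]
  refine fourierCoeff_congr ?_ k
  filter_upwards [coeFn_fourierLp (T := 2 * π) 2 0] with x hx
  rw [hx, fourier_zero, mul_one]

theorem symbol_ae_const (θ : SymbolS) (hθ : θ.MemHinf)
    (h : ∀ k : ℤ, k ≠ 0 → fourierCoeff θ.toFun k = 0) :
    ∃ c : ℂ, ∀ᵐ x ∂μ𝕋, θ.toFun x = c := by
  set g : L2S := θ.mulLp (fourierLp (T := 2 * π) 2 0) with hg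
  have hgc : (g : 𝕋 → ℂ) =ᵐ[μ𝕋] θ.toFun := by
    filter_upwards [mulLp_coeFn_s14 θ (fourierLp (T := 2 * π) 2 0), coeFn_fourierLp (T := 2 * π) 2 0]
      with x h1 h2
    rw [h1, h2, fourier_zero, mul_one]
  have hco : ∀ k : ℤ, k ≠ 0 → fourierCoeff (g : 𝕋 → ℂ) k = 0 := fun k hk => by
    rw [fourierCoeff_congr hgc]; exact h k hk
  set c : ℂ := fourierCoeff (g : 𝕋 → ℂ) 0 with hc
  have hsum : HasSum (fun i : ℤ => fourierCoeff (g : 𝕋 → ℂ) i • fourierLp (T := 2 * π) 2 i)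
      (c • fourierLp (T := 2 * π) 2 0) := by
    refine hasSum_single 0 fun b hb => ?_
    rw [hco b hb, zero_smul]
  have := (hasSum_fourier_series_L2 g).unique hsum
  refine ⟨c, ?_⟩
  have hcoe : (g : 𝕋 → ℂ) =ᵐ[μ𝕋] fun _ => c := by
    rw [this]
    filter_upwards [Lp.coeFn_smul c (fourierLp (T := 2 * π) 2 0),
      coeFn_fourierLp (T := 2 * π) 2 0] with x h1 h2
    rw [h1]
    simp only [Pi.smul_apply]
    rw [h2, fourier_zero, smul_eq_mul, mul_one]
  filter_upwards [hgc, hcoe] with x h1 h2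
  rw [← h1, h2]

/-! ### The shift symbols -/

def eSym (m : ℤ) : SymbolS where
  toFun := fun x => fourier m x
  meas := (map_continuous (fourier m)).aestronglyMeasurable
  bound := 1
  le_bound := fun x => le_of_eq (norm_fourier_apply m x)

theorem eSym_mul_mem (m : ℕ) {h : L2S} (hh : h ∈ hardyS) :
    (eSym m).mulLp h ∈ hardyS := by
  rw [mem_hardyS_iff]
  intro k hk
  rw [fourierCoeff_congr (mulLp_coeFn_s14 _ h)]
  rw [show (fun x => (eSym m).toFun x * (h : 𝕋 → ℂ) x)
      = fun x => fourier (m : ℤ) x * (h : 𝕋 → ℂ) x from rfl]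
  rw [fourierCoeff_fourier_mul]
  exact mem_hardyS_iff.mp hh _ (by omega)

/-! ### The quotient symbol -/

def quotS (θ1 θ2 θ3 : SymbolS) : SymbolS where
  toFun := fun x => θ3.toFun x * (conj (θ1.toFun x) * conj (θ2.toFun x))
  meas := θ3.meas.mul ((Complex.continuous_conj.comp_aestronglyMeasurable θ1.meas).mul
    (Complex.continuous_conj.comp_aestronglyMeasurable θ2.meas))
  bound := θ3.bound * (θ1.bound * θ2.bound)
  le_bound := fun x => by
    have n1 : (0:ℝ) ≤ θ1.bound := le_trans (norm_nonneg _) (θ1.le_bound x)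
    rw [norm_mul, norm_mul, RCLike.norm_conj, RCLike.norm_conj]
    exact mul_le_mul (θ3.le_bound x)
      (mul_le_mul (θ1.le_bound x) (θ2.le_bound x) (norm_nonneg _) n1)
      (mul_nonneg (norm_nonneg _) (norm_nonneg _))
      (le_trans (norm_nonneg _) (θ3.le_bound x))

/-! ### The two families of integrals -/

def Cc (θ1 θ2 θ3 : SymbolS) (N : ℤ) (h : L2S) : ℂ :=
  ∫ x, fourier N x * (conj (θ1.toFun x) * conj (θ2.toFun x)
    * (θ3.toFun x * (h : 𝕋 → ℂ) x)) ∂μ𝕋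

def Dd (θ1 θ3 : SymbolS) (N : ℤ) (h : L2S) : ℂ :=
  ∫ x, fourier N x * (conj (θ1.toFun x) * (θ3.toFun x * (h : 𝕋 → ℂ) x)) ∂μ𝕋

theorem integrable_Cc (θ1 θ2 θ3 : SymbolS) (N : ℤ) (h : L2S) :
    Integrable (fun x => fourier N x * (conj (θ1.toFun x) * conj (θ2.toFun x)
      * (θ3.toFun x * (h : 𝕋 → ℂ) x))) μ𝕋 := by
  have := integrable_fourier_mul ((integrable_lp h).bdd_mul
    ((quotS θ1 θ2 θ3).meas) (Eventually.of_forall (quotS θ1 θ2 θ3).le_bound)) N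
  refine this.congr (Eventually.of_forall fun x => ?_)
  show fourier N x * ((θ3.toFun x * (conj (θ1.toFun x) * conj (θ2.toFun x)))
    * (h : 𝕋 → ℂ) x) = _
  ring

theorem integrable_Dd (θ1 θ3 : SymbolS) (N : ℤ) (h : L2S) :
    Integrable (fun x => fourier N x * (conj (θ1.toFun x)
      * (θ3.toFun x * (h : 𝕋 → ℂ) x))) μ𝕋 := by
  have := integrable_fourier_mul ((integrable_lp h).bdd_mul
    ((θ1.conj.mul θ3).meas) (Eventually.of_forall (θ1.conj.mul θ3).le_bound)) N
  refine this.congr (Eventually.of_forall fun x => ?_)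
  show fourier N x * ((conj (θ1.toFun x) * θ3.toFun x) * (h : 𝕋 → ℂ) x) = _
  ring

theorem Cc_shift (θ1 θ2 θ3 : SymbolS) (N : ℤ) (m : ℕ) (h : L2S) :
    Cc θ1 θ2 θ3 N ((eSym m).mulLp h) = Cc θ1 θ2 θ3 (N + m) h := by
  unfold Cc
  refine integral_congr_ae ?_
  filter_upwards [mulLp_coeFn_s14 (eSym m) h] with x hx
  rw [hx]
  show fourier N x * (_ * (_ * (fourier (m : ℤ) x * _))) = _
  rw [fourier_add]
  ring

theorem Dd_shift (θ1 θ3 : SymbolS) (N : ℤ) (m : ℕ) (h : L2S) :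
    Dd θ1 θ3 N ((eSym m).mulLp h) = Dd θ1 θ3 (N + m) h := by
  unfold Dd
  refine integral_congr_ae ?_
  filter_upwards [mulLp_coeFn_s14 (eSym m) h] with x hx
  rw [hx]
  show fourier N x * (_ * (_ * (fourier (m : ℤ) x * _))) = _
  rw [fourier_add]
  ring


theorem integrable_fourier_fn (m : ℤ) : Integrable (fun x => fourier m x : 𝕋 → ℂ) μ𝕋 :=
  ⟨(map_continuous (fourier m)).aestronglyMeasurable,
    HasFiniteIntegral.of_bounded (C := 1)
      (Eventually.of_forall fun x => le_of_eq (norm_fourier_apply m x))⟩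

theorem key (θ1 θ2 θ3 : SymbolS) (h1 : θ1.IsInner) (h2 : θ2.IsInner) (_h3 : θ3.IsInner)
    (j0 : ℕ) (hj0 : 1 ≤ j0) (haj : fourierCoeff θ2.toFun (j0 : ℤ) ≠ 0)
    (hyp : Submodule.map (θ1.mulLp : L2S →ₗ[ℂ] L2S) (modelSpaceS θ2) ≤ modelSpaceS θ3) :
    (quotS θ1 θ2 θ3).IsInner ∧
      ∀ᵐ x ∂μ𝕋, θ3.toFun x = θ1.toFun x * θ2.toFun x * (quotS θ1 θ2 θ3).toFun x := by
  classical
  set a : ℤ → ℂ := fourierCoeff θ2.toFun with ha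
  have hac : ∀ k : ℤ, k < 0 → a k = 0 := fun k hk => symbol_coeff_neg θ2 h2.1 hk
  -- the test functions in the model space of θ2
  set F : ℕ → 𝕋 → ℂ := fun n x =>
    fourier (-(n:ℤ)) x * (θ2.toFun x - ∑ j ∈ Finset.range n, a j * fourier (j:ℤ) x) with hF
  have hFm : ∀ n, AEStronglyMeasurable (F n) μ𝕋 := fun n =>
    (map_continuous (fourier (-(n:ℤ)))).aestronglyMeasurable.mul
      (θ2.meas.sub (continuous_finset_sum
        (f := fun (j : ℕ) (x : 𝕋) => a (j:ℤ) * fourier (j:ℤ) x) _ (fun j _ =>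
        (continuous_const.mul (map_continuous (fourier (j:ℤ)))))).aestronglyMeasurable)
  have hF2 : ∀ n, MemLp (F n) 2 μ𝕋 := by
    intro n
    refine MemLp.of_bound (hFm n) (θ2.bound + ∑ j ∈ Finset.range n, ‖a j‖)
      (Eventually.of_forall fun x => ?_)
    rw [hF]
    dsimp only
    rw [norm_mul, norm_fourier_apply, one_mul]
    refine (norm_sub_le _ _).trans (add_le_add (θ2.le_bound x) ?_)
    refine (norm_sum_le _ _).trans (le_of_eq (Finset.sum_congr rfl fun j _ => ?_))
    rw [norm_mul, norm_fourier_apply, mul_one]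
  set fL : ℕ → L2S := fun n => MemLp.toLp (F n) (hF2 n) with hfL
  have hLcoe : ∀ n, (fL n : 𝕋 → ℂ) =ᵐ[μ𝕋] F n := fun n => MemLp.coeFn_toLp (hF2 n)
  -- Fourier coefficients of F n
  have hFcoeff : ∀ (n : ℕ) (k : ℤ), fourierCoeff (F n) k
      = a (k + n) - ∑ j ∈ Finset.range n, a j * (if k + n = (j:ℤ) then 1 else 0) := by
    intro n k
    have e0 : F n = fun x => fourier (-(n:ℤ)) x *
        ((fun y => θ2.toFun y - ∑ j ∈ Finset.range n, a j * fourier (j:ℤ) y) x) := by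
      rw [hF]
    rw [e0, fourierCoeff_fourier_mul, show k - (-(n:ℤ)) = k + n by ring]
    rw [fourierCoeff_sub (symbol_integrable θ2)
      (integrable_finset_sum (f := fun (j : ℕ) (x : 𝕋) => a (j:ℤ) * fourier (j:ℤ) x) _
        fun j _ => (integrable_fourier_fn (j:ℤ)).const_mul (a (j:ℤ)))]
    rw [← ha]
    congr 1
    rw [fourierCoeff_sum (fun j _ => (integrable_fourier_fn (j:ℤ)).const_mul (a j))]
    refine Finset.sum_congr rfl fun j _ => ?_
    rw [fourierCoeff.const_mul, fourierCoeff_fourier]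
  -- fL n lies in the Hardy space
  have hLhardy : ∀ n : ℕ, fL n ∈ hardyS := by
    intro n
    rw [mem_hardyS_iff]
    intro k hk
    rw [fourierCoeff_congr (hLcoe n), hFcoeff n k]
    by_cases hkn : 0 ≤ k + n
    · have hmem : (k + n).toNat ∈ Finset.range n := Finset.mem_range.mpr (by omega)
      rw [Finset.sum_eq_single ((k + n).toNat)]
      · rw [if_pos (by omega), mul_one,
          show ((((k + (n:ℤ)).toNat : ℕ)) : ℤ) = k + n by omega, sub_self]
      · intro j hj hne
        rw [if_neg (by omega), mul_zero]
      · intro hno; exact absurd hmem hno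
    · push_neg at hkn
      rw [Finset.sum_eq_zero fun j hj => by rw [if_neg (by omega), mul_zero]]
      rw [hac _ (by omega), sub_zero]
  -- conjugate of F n
  have hFconj : ∀ (n : ℕ) (x : 𝕋), conj (F n x) = fourier (n:ℤ) x *
      (conj (θ2.toFun x) - ∑ j ∈ Finset.range n, conj (a j) * fourier (-(j:ℤ)) x) := by
    intro n x
    rw [hF]
    dsimp only
    rw [map_mul, map_sub, map_sum, conj_fourier, neg_neg]
    congr 2
    exact Finset.sum_congr rfl fun j _ => by rw [map_mul, conj_fourier]
  -- fL n is orthogonal to θ2 H²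
  have hLperp : ∀ n : ℕ, 1 ≤ n → fL n ∈ (θ2.rangeH2)ᗮ := by
    intro n hn
    rw [Submodule.mem_orthogonal']
    intro u hu
    obtain ⟨h, hh, rfl⟩ := Submodule.mem_map.mp hu
    show (inner ℂ (fL n) (θ2.mulLp h) : ℂ) = 0
    rw [MeasureTheory.L2.inner_def]
    have hae : (fun x => (inner ℂ ((fL n : 𝕋 → ℂ) x) ((θ2.mulLp h : 𝕋 → ℂ) x) : ℂ))
        =ᵐ[μ𝕋] fun x => fourier (n:ℤ) x * (h : 𝕋 → ℂ) x
          - ∑ j ∈ Finset.range n, conj (a j)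
            * (fourier ((n:ℤ) - (j:ℤ)) x * ((θ2.mulLp h : 𝕋 → ℂ) x)) := by
      filter_upwards [hLcoe n, mulLp_coeFn_s14 θ2 h, h2.2] with x k1 k2 k3
      rw [RCLike.inner_apply', k1, k2, hFconj n x]
      have hw : conj (θ2.toFun x) * θ2.toFun x = 1 := conj_mul_self_one k3
      have e1 : ∀ j ∈ Finset.range n,
          conj (a j) * (fourier ((n:ℤ) - (j:ℤ)) x * (θ2.toFun x * (h : 𝕋 → ℂ) x))
          = (conj (a j) * fourier (-(j:ℤ)) x)
            * (fourier (n:ℤ) x * (θ2.toFun x * (h : 𝕋 → ℂ) x)) := by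
        intro j _
        rw [show ((n:ℤ) - (j:ℤ)) = (n:ℤ) + (-(j:ℤ)) by ring, fourier_add]
        ring
      rw [Finset.sum_congr rfl e1, ← Finset.sum_mul]
      linear_combination (fourier (n:ℤ) x * ((h : 𝕋 → ℂ) x)) * hw
    rw [integral_congr_ae hae]
    rw [integral_sub (integrable_fourier_mul (integrable_lp h) _)
      (integrable_finset_sum _ fun j _ =>
        (integrable_fourier_mul (integrable_lp (θ2.mulLp h)) _).const_mul _)]
    rw [integral_finset_sum _ (fun j _ =>
      (integrable_fourier_mul (integrable_lp (θ2.mulLp h)) _).const_mul _)]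
    have hv1 : ∫ x, fourier (n:ℤ) x * (h : 𝕋 → ℂ) x ∂μ𝕋 = 0 := by
      have e := fourierCoeff_eq_integral ((h : 𝕋 → ℂ)) (-(n:ℤ))
      rw [neg_neg] at e
      rw [← e]
      exact mem_hardyS_iff.mp hh _ (by omega)
    have hv2 : ∀ j ∈ Finset.range n,
        (∫ x, conj (a j) * (fourier ((n:ℤ) - (j:ℤ)) x * ((θ2.mulLp h : 𝕋 → ℂ) x)) ∂μ𝕋)
          = 0 := by
      intro j hj
      rw [integral_const_mul]
      rw [show ((n:ℤ) - (j:ℤ)) = -((j:ℤ) - (n:ℤ)) by ring]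
      rw [← fourierCoeff_eq_integral]
      rw [mem_hardyS_iff.mp (h2.1 h hh) _
        (by have := Finset.mem_range.mp hj; omega), mul_zero]
    rw [hv1, Finset.sum_eq_zero hv2, sub_zero]
  -- the fundamental relation
  have hbase : ∀ (n : ℕ), 1 ≤ n → ∀ h : L2S, h ∈ hardyS →
      Cc θ1 θ2 θ3 (n:ℤ) h
        = ∑ j ∈ Finset.range n, conj (a j) * Dd θ1 θ3 ((n:ℤ) - (j:ℤ)) h := by
    intro n hn h hh
    have hmod : fL n ∈ modelSpaceS θ2 := Submodule.mem_inf.mpr ⟨hLhardy n, hLperp n hn⟩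
    have hmem := hyp (Submodule.mem_map_of_mem (f := (θ1.mulLp : L2S →ₗ[ℂ] L2S)) hmod)
    have hperp3 := (Submodule.mem_inf.mp hmem).2
    rw [Submodule.mem_orthogonal'] at hperp3
    have horto : (inner ℂ (θ1.mulLp (fL n)) (θ3.mulLp h) : ℂ) = 0 :=
      hperp3 (θ3.mulLp h) (Submodule.mem_map.mpr ⟨h, hh, rfl⟩)
    rw [MeasureTheory.L2.inner_def] at horto
    have hae : (fun x => (inner ℂ ((θ1.mulLp (fL n) : 𝕋 → ℂ) x) ((θ3.mulLp h : 𝕋 → ℂ) x) : ℂ))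
        =ᵐ[μ𝕋] fun x => fourier (n:ℤ) x * (conj (θ1.toFun x) * conj (θ2.toFun x)
            * (θ3.toFun x * (h : 𝕋 → ℂ) x))
          - ∑ j ∈ Finset.range n, conj (a j) * (fourier ((n:ℤ) - (j:ℤ)) x
            * (conj (θ1.toFun x) * (θ3.toFun x * (h : 𝕋 → ℂ) x))) := by
      filter_upwards [mulLp_coeFn_s14 θ1 (fL n), mulLp_coeFn_s14 θ3 h, hLcoe n] with x k1 k3 kF
      rw [RCLike.inner_apply', k1, kF, k3, map_mul, hFconj n x]
      have e1 : ∀ j ∈ Finset.range n,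
          conj (a j) * (fourier ((n:ℤ) - (j:ℤ)) x
            * (conj (θ1.toFun x) * (θ3.toFun x * (h : 𝕋 → ℂ) x)))
          = (conj (a j) * fourier (-(j:ℤ)) x)
            * (fourier (n:ℤ) x * (conj (θ1.toFun x) * (θ3.toFun x * (h : 𝕋 → ℂ) x))) := by
        intro j _
        rw [show ((n:ℤ) - (j:ℤ)) = (n:ℤ) + (-(j:ℤ)) by ring, fourier_add]
        ring
      rw [Finset.sum_congr rfl e1, ← Finset.sum_mul]
      ring
    rw [integral_congr_ae hae] at horto
    rw [integral_sub (integrable_Cc θ1 θ2 θ3 _ h)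
      (integrable_finset_sum _ fun j _ => (integrable_Dd θ1 θ3 _ h).const_mul _)] at horto
    rw [integral_finset_sum _ (fun j _ => (integrable_Dd θ1 θ3 _ h).const_mul _)] at horto
    simp only [integral_const_mul] at horto
    unfold Cc Dd
    exact sub_eq_zero.mp horto
  -- shifted relations
  have hgen : ∀ (N n : ℕ), 1 ≤ n → n ≤ N → ∀ h : L2S, h ∈ hardyS →
      Cc θ1 θ2 θ3 (N:ℤ) h
        = ∑ j ∈ Finset.range n, conj (a j) * Dd θ1 θ3 ((N:ℤ) - (j:ℤ)) h := by
    intro N n h1n hnN h hh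
    have hb := hbase n h1n ((eSym ((N - n : ℕ) : ℤ)).mulLp h) (eSym_mul_mem _ hh)
    rw [Cc_shift] at hb
    simp only [Dd_shift] at hb
    rw [show ((n:ℤ) + ((N - n : ℕ) : ℤ)) = (N:ℤ) by omega] at hb
    rw [hb]
    refine Finset.sum_congr rfl fun j hj => ?_
    rw [show ((n:ℤ) - (j:ℤ) + ((N - n : ℕ) : ℤ)) = (N:ℤ) - (j:ℤ) by omega]
  -- the d-integrals vanish
  have hd0 : ∀ (k : ℕ), 1 ≤ k → ∀ h : L2S, h ∈ hardyS → Dd θ1 θ3 (k:ℤ) h = 0 := by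
    intro k hk h hh
    have hA := hgen (j0 + k) j0 hj0 (by omega) h hh
    have hB := hgen (j0 + k) (j0 + 1) (by omega) (by omega) h hh
    rw [Finset.sum_range_succ] at hB
    have h3 := hA.symm.trans hB
    have h4 := left_eq_add.mp h3
    have hcj : conj (a (j0 : ℤ)) ≠ 0 := by
      rw [starRingEnd_apply, star_ne_zero]
      exact haj
    have h5 := (mul_eq_zero.mp h4).resolve_left hcj
    rw [show (((j0 + k : ℕ) : ℤ) - (j0 : ℤ)) = (k:ℤ) by push_cast; ring] at h5
    exact h5
  -- the c-integrals vanish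
  have hc0 : ∀ (N : ℕ), 1 ≤ N → ∀ h : L2S, h ∈ hardyS → Cc θ1 θ2 θ3 (N:ℤ) h = 0 := by
    intro N hN h hh
    rw [hgen N 1 le_rfl hN h hh, Finset.sum_range_one]
    rw [show ((N:ℤ) - ((0:ℕ):ℤ)) = ((N:ℕ):ℤ) by simp]
    rw [hd0 N hN h hh, mul_zero]
  -- the quotient symbol is in H^∞
  have hq : (quotS θ1 θ2 θ3).MemHinf := by
    intro h hh
    rw [mem_hardyS_iff]
    intro k hk
    rw [fourierCoeff_congr (mulLp_coeFn_s14 _ h)]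
    have e : fourierCoeff (fun x => (quotS θ1 θ2 θ3).toFun x * (h : 𝕋 → ℂ) x) k
        = Cc θ1 θ2 θ3 (-k) h := by
      rw [fourierCoeff_eq_integral]
      unfold Cc
      refine integral_congr_ae (Eventually.of_forall fun x => ?_)
      show fourier (-k) x * ((θ3.toFun x * (conj (θ1.toFun x) * conj (θ2.toFun x)))
        * (h : 𝕋 → ℂ) x) = _
      ring
    rw [e, show (-k) = (((-k).toNat : ℕ) : ℤ) by omega]
    exact hc0 (-k).toNat (by omega) h hh
  refine ⟨⟨hq, ?_⟩, ?_⟩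
  · filter_upwards [h1.2, h2.2, _h3.2] with x e1 e2 e3
    show ‖θ3.toFun x * (conj (θ1.toFun x) * conj (θ2.toFun x))‖ = 1
    rw [norm_mul, norm_mul, RCLike.norm_conj, RCLike.norm_conj, e1, e2, e3]
    norm_num
  · filter_upwards [h1.2, h2.2] with x e1 e2
    have w1 : conj (θ1.toFun x) * θ1.toFun x = 1 := conj_mul_self_one e1
    have w2 : conj (θ2.toFun x) * θ2.toFun x = 1 := conj_mul_self_one e2
    show θ3.toFun x = θ1.toFun x * θ2.toFun x
      * (θ3.toFun x * (conj (θ1.toFun x) * conj (θ2.toFun x)))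
    linear_combination (-(θ3.toFun x) * (conj (θ2.toFun x) * θ2.toFun x)) * w1
      + (-(θ3.toFun x)) * w2

/-- **Statement 15.** For inner functions `θ₁, θ₂, θ₃`: if `θ₁·H(θ₂) ⊆ H(θ₃)` then either
`θ₂` is constant or `θ₁θ₂` divides `θ₃`; in particular if `θ₁·H(θ₂) ⊆ H(θ₁)` then `θ₁` or
`θ₂` is constant. -/
theorem statement15 (θ1 θ2 θ3 : SymbolS) (h1 : θ1.IsInner) (h2 : θ2.IsInner)
    (h3 : θ3.IsInner) :
    (Submodule.map (θ1.mulLp : L2S →ₗ[ℂ] L2S) (modelSpaceS θ2) ≤ modelSpaceS θ3 →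
      (∃ c : ℂ, ∀ᵐ x ∂μ𝕋, θ2.toFun x = c) ∨
        ∃ θ0 : SymbolS, θ0.IsInner ∧
          ∀ᵐ x ∂μ𝕋, θ3.toFun x = θ1.toFun x * θ2.toFun x * θ0.toFun x) ∧
    (Submodule.map (θ1.mulLp : L2S →ₗ[ℂ] L2S) (modelSpaceS θ2) ≤ modelSpaceS θ1 →
      (∃ c : ℂ, ∀ᵐ x ∂μ𝕋, θ1.toFun x = c) ∨ ∃ c : ℂ, ∀ᵐ x ∂μ𝕋, θ2.toFun x = c) := by
  by_cases hA : ∀ j : ℤ, 0 < j → fourierCoeff θ2.toFun j = 0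
  · have hconst : ∃ c : ℂ, ∀ᵐ x ∂μ𝕋, θ2.toFun x = c := by
      refine symbol_ae_const θ2 h2.1 fun k hk => ?_
      rcases lt_trichotomy k 0 with h | h | h
      · exact symbol_coeff_neg θ2 h2.1 h
      · exact absurd h hk
      · exact hA k h
    exact ⟨fun _ => Or.inl hconst, fun _ => Or.inr hconst⟩
  · push_neg at hA
    obtain ⟨j, hj, haj⟩ := hA
    have hj1 : 1 ≤ j.toNat := by omega
    have haj' : fourierCoeff θ2.toFun ((j.toNat : ℕ) : ℤ) ≠ 0 := by
      rwa [Int.toNat_of_nonneg hj.le]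
    constructor
    · intro hyp
      obtain ⟨hinner, heq⟩ := key θ1 θ2 θ3 h1 h2 h3 j.toNat hj1 haj' hyp
      exact Or.inr ⟨quotS θ1 θ2 θ3, hinner, heq⟩
    · intro hyp
      obtain ⟨hinner, -⟩ := key θ1 θ2 θ1 h1 h2 h1 j.toNat hj1 haj' hyp
      refine Or.inr (symbol_ae_const θ2 h2.1 fun k hk => ?_)
      rcases lt_trichotomy k 0 with h | h | h
      · exact symbol_coeff_neg θ2 h2.1 h
      · exact absurd h hk
      · have hm : θ2.toFun =ᵐ[μ𝕋] fun x => conj ((quotS θ1 θ2 θ1).toFun x) := by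
          filter_upwards [h1.2] with x e1
          have w1 : conj (θ1.toFun x) * θ1.toFun x = 1 := conj_mul_self_one e1
          show θ2.toFun x = conj (θ1.toFun x * (conj (θ1.toFun x) * conj (θ2.toFun x)))
          rw [map_mul, map_mul, Complex.conj_conj, Complex.conj_conj]
          linear_combination (-(θ2.toFun x)) * w1
        calc fourierCoeff θ2.toFun k
            = fourierCoeff (fun x => conj ((quotS θ1 θ2 θ1).toFun x)) k :=
              fourierCoeff_congr hm k
          _ = conj (fourierCoeff (quotS θ1 θ2 θ1).toFun (-k)) := fourierCoeff_conj _ k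
          _ = 0 := by
              rw [symbol_coeff_neg _ hinner.1 (by omega), map_zero]

end BlockToeplitz
end
end
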